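/- Let G = (V,A) be a finite simple graph without isolated vertices and n = n(G) = W ⊕ z its graph algebra over a field k of characteristic zero. Let ω ∈ W∧z be n-invariant and write ω = Σ_{e∈V, α∈A} λ_{e,α} e∧α. Then λ_{e,α} = 0 for every edge α ∈ A and every vertex e ∈ V of degree at least 2. -/

import Mathlib

open TensorProduct

set_option synthInstance.maxHeartbeats 1000000
set_option maxHeartbeats 1000000

/-- The adjoint action of a Lie algebra `g` on `g ⊗ g`, determined by
`x · (a ⊗ b) = ⁅x,a⁆ ⊗ b + a ⊗ ⁅x,b⁆`. -/
noncomputable def tAct (k g : Type*) [CommRing k] [LieRing g] [LieAlgebra k g] (x : g) :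
    g ⊗[k] g →ₗ[k] g ⊗[k] g :=
  TensorProduct.map (LieAlgebra.ad k g x) LinearMap.id
    + TensorProduct.map LinearMap.id (LieAlgebra.ad k g x)

/-- The degree (valency) of a vertex `e` in the graph with edge set `A` and
endpoint maps `src`, `tgt`. -/
def deg {V A : Type*} [Fintype A] [DecidableEq V] (src tgt : A → V) (e : V) : ℕ :=
  (Finset.univ.filter (fun a : A => src a = e ∨ tgt a = e)).card

/-- in the graph algebra `n(G) = W ⊕ z` of a finite simple graph without
isolated vertices, if `ω = Σ_{e,α} λ_{e,α} e∧α ∈ W∧z` (each wedge `e∧α` modelled as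
`e ⊗ α − α ⊗ e`) is `n`-invariant, then `λ_{e,α} = 0` for every edge `α` and every vertex
`e` of degree at least 2. -/
theorem stmt9 (k V A N : Type*) [Field k] [CharZero k]
    [Fintype V] [Fintype A] [DecidableEq V] [DecidableEq A]
    [LieRing N] [LieAlgebra k N]
    (src tgt : A → V)
    (hloop : ∀ a, src a ≠ tgt a)
    (hsimple : ∀ a b : A,
      (src a = src b ∧ tgt a = tgt b) ∨ (src a = tgt b ∧ tgt a = src b) → a = b)
    (B : Module.Basis (V ⊕ A) k N)
    (hbz : ∀ (a : A) (x : N), ⁅B (Sum.inr a), x⁆ = 0)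
    (hbe : ∀ a : A, ⁅B (Sum.inl (src a)), B (Sum.inl (tgt a))⁆ = B (Sum.inr a))
    (hbe0 : ∀ i j : V,
      (∀ a : A, ¬((src a = i ∧ tgt a = j) ∨ (src a = j ∧ tgt a = i))) →
      ⁅B (Sum.inl i), B (Sum.inl j)⁆ = 0)
    (hnoiso : ∀ e : V, 0 < deg src tgt e)
    (lam : V → A → k)
    (ω : N ⊗[k] N)
    (hω : ω = ∑ e : V, ∑ a : A,
      lam e a • (B (Sum.inl e) ⊗ₜ[k] B (Sum.inr a) - B (Sum.inr a) ⊗ₜ[k] B (Sum.inl e)))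
    (hinv : ∀ x : N, tAct k N x ω = 0) :
    ∀ (e : V) (a : A), 2 ≤ deg src tgt e → lam e a = 0 := by
  classical
  have hbz' : ∀ (a : A) (x : N), ⁅x, B (Sum.inr a)⁆ = 0 := by
    intro a x; rw [← lie_skew, hbz]; simp
  set sg : V → V → A → k := fun i e b =>
    (if src b = i ∧ tgt b = e then (1:k) else 0)
      - (if src b = e ∧ tgt b = i then 1 else 0) with hsg
  have L1 : ∀ i e : V, ⁅B (Sum.inl i), B (Sum.inl e)⁆ = ∑ b : A, sg i e b • B (Sum.inr b) := by
    intro i e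
    by_cases h : ∃ b : A, (src b = i ∧ tgt b = e) ∨ (src b = e ∧ tgt b = i)
    · obtain ⟨b, hb⟩ := h
      have hz : ∀ c ∈ Finset.univ, c ≠ b → sg i e c • B (Sum.inr c) = (0 : N) := by
        intro c _ hc
        have hc1 : ¬(src c = i ∧ tgt c = e) := by
          rintro ⟨h1, h2⟩
          apply hc
          apply hsimple c b
          rcases hb with ⟨h3, h4⟩ | ⟨h3, h4⟩
          · exact Or.inl ⟨h1.trans h3.symm, h2.trans h4.symm⟩
          · exact Or.inr ⟨h1.trans h4.symm, h2.trans h3.symm⟩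
        have hc2 : ¬(src c = e ∧ tgt c = i) := by
          rintro ⟨h1, h2⟩
          apply hc
          apply hsimple c b
          rcases hb with ⟨h3, h4⟩ | ⟨h3, h4⟩
          · exact Or.inr ⟨h1.trans h4.symm, h2.trans h3.symm⟩
          · exact Or.inl ⟨h1.trans h3.symm, h2.trans h4.symm⟩
        simp [hsg, hc1, hc2]
      rw [Finset.sum_eq_single_of_mem b (Finset.mem_univ b) hz]
      rcases hb with ⟨h1, h2⟩ | ⟨h1, h2⟩
      · have hne : ¬(src b = e ∧ tgt b = i) := by
          rintro ⟨h3, h4⟩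
          exact hloop b (h1.trans ((h1.symm.trans h3).trans h2.symm))
        have hie : i ≠ e := fun h' => hloop b (h1.trans (h'.trans h2.symm))
        have : sg i e b = 1 := by simp [hsg, h1, h2, hie]
        rw [this, one_smul, ← h1, ← h2, hbe]
      · have hne : ¬(src b = i ∧ tgt b = e) := by
          rintro ⟨h3, h4⟩
          exact hloop b (h3.trans ((h3.symm.trans h1).trans h4.symm))
        have hei : e ≠ i := fun h' => hloop b (h1.trans (h'.trans h2.symm))
        have : sg i e b = -1 := by simp [hsg, h1, h2, hei]
        rw [this, ← lie_skew, ← h1, ← h2, hbe]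
        simp
    · have h' : ∀ c : A, ¬((src c = i ∧ tgt c = e) ∨ (src c = e ∧ tgt c = i)) :=
        fun c hc => h ⟨c, hc⟩
      rw [hbe0 i e h']
      symm
      apply Finset.sum_eq_zero
      intro c _
      have hc' := h' c
      rw [not_or] at hc'
      simp [hsg, hc'.1, hc'.2]
  have tmul_act : ∀ (x u v : N), tAct k N x (u ⊗ₜ[k] v) = ⁅x, u⁆ ⊗ₜ[k] v + u ⊗ₜ[k] ⁅x, v⁆ := by
    intro x u v
    simp [tAct, TensorProduct.map_tmul, LieAlgebra.ad_apply]
  have key : ∀ (i : V) (b a : A),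
      ((if src b = i then lam (tgt b) a else 0) - (if tgt b = i then lam (src b) a else 0))
    = ((if src a = i then lam (tgt a) b else 0) - (if tgt a = i then lam (src a) b else 0)) := by
    intro i b a
    have h := hinv (B (Sum.inl i))
    rw [hω] at h
    have step : ∀ (e : V) (a' : A),
        tAct k N (B (Sum.inl i)) (lam e a' •
          (B (Sum.inl e) ⊗ₜ[k] B (Sum.inr a') - B (Sum.inr a') ⊗ₜ[k] B (Sum.inl e)))
      = ∑ c : A, (lam e a' * sg i e c) •
          (B (Sum.inr c) ⊗ₜ[k] B (Sum.inr a') - B (Sum.inr a') ⊗ₜ[k] B (Sum.inr c)) := by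
      intro e a'
      rw [map_smul, map_sub, tmul_act, tmul_act, hbz', L1 i e]
      simp only [TensorProduct.tmul_zero, TensorProduct.zero_tmul, add_zero, zero_add,
        TensorProduct.sum_tmul, TensorProduct.tmul_sum, ← Finset.sum_sub_distrib,
        Finset.smul_sum, TensorProduct.smul_tmul', TensorProduct.tmul_smul, ← smul_sub,
        smul_smul]
      refine Finset.sum_congr rfl fun c _ => ?_
      simp only [smul_sub, TensorProduct.smul_tmul', TensorProduct.tmul_smul, smul_smul]
    simp only [map_sum, step] at h
    have h2 := congrArg (fun z => ((Module.Basis.tensorProduct B B).repr z) (Sum.inr b, Sum.inr a)) h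
    simp only [map_sum, map_smul, map_sub, Finsupp.coe_finset_sum, Finset.sum_apply,
      Finsupp.coe_smul, Pi.smul_apply, Finsupp.sub_apply, Module.Basis.tensorProduct_repr_tmul_apply,
      Module.Basis.repr_self, Finsupp.single_apply, Sum.inr.injEq, smul_eq_mul, Finsupp.coe_zero,
      Pi.zero_apply] at h2
    simp only [map_zero, Finsupp.coe_zero, Pi.zero_apply, hsg, mul_sub, sub_mul, mul_ite,
      ite_mul, mul_one, mul_zero, zero_mul, one_mul, ite_and, Finset.sum_sub_distrib,
      Finset.sum_ite_eq, Finset.sum_ite_eq', Finset.mem_univ, if_true, sub_zero, zero_sub,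
      Finset.sum_ite_irrel, Finset.sum_const_zero] at h2
    linear_combination h2
  have M : ∀ (e f : V) (b a : A),
      ((src b = e ∧ tgt b = f) ∨ (src b = f ∧ tgt b = e)) →
      src a ≠ f → tgt a ≠ f → lam e a = 0 := by
    intro e f b a hb ha1 ha2
    have h := key f b a
    rcases hb with ⟨h1, h2⟩ | ⟨h1, h2⟩
    · have hef : e ≠ f := fun h' => hloop b (h1.trans (h'.trans h2.symm))
      have hsf : ¬ src b = f := h1 ▸ hef
      rw [if_neg hsf, if_pos h2, if_neg ha1, if_neg ha2, h1] at h
      simpa using h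
    · have hfe : f ≠ e := fun h' => hloop b (h1.trans (h'.trans h2.symm))
      have htf : ¬ tgt b = f := h2 ▸ (Ne.symm hfe)
      rw [if_pos h1, if_neg htf, if_neg ha1, if_neg ha2, h2] at h
      simpa using h
  intro e a hdeg
  have hdeg' : 1 < (Finset.univ.filter (fun x : A => src x = e ∨ tgt x = e)).card := by
    have h' := hdeg; unfold deg at h'; omega
  have h2 := Finset.one_lt_card.mp hdeg'
  obtain ⟨b, hb, c, hc, hbc⟩ := h2
  rw [Finset.mem_filter] at hb hc
  have other : ∀ d : A, (src d = e ∨ tgt d = e) →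
      ∃ f, f ≠ e ∧ ((src d = e ∧ tgt d = f) ∨ (src d = f ∧ tgt d = e)) := by
    intro d hd
    rcases hd with h | h
    · exact ⟨tgt d, fun h' => hloop d (h.trans h'.symm), Or.inl ⟨h, rfl⟩⟩
    · exact ⟨src d, fun h' => hloop d (h' ▸ h.symm ▸ rfl), Or.inr ⟨rfl, h⟩⟩
  obtain ⟨f, hfe, hbf⟩ := other b hb.2
  obtain ⟨g, hge, hcg⟩ := other c hc.2
  have hfg : f ≠ g := by
    intro h'
    subst h'
    apply hbc
    apply hsimple b c
    rcases hbf with ⟨s1, t1⟩ | ⟨s1, t1⟩ <;> rcases hcg with ⟨s2, t2⟩ | ⟨s2, t2⟩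
    · exact Or.inl ⟨s1.trans s2.symm, t1.trans t2.symm⟩
    · exact Or.inr ⟨s1.trans t2.symm, t1.trans s2.symm⟩
    · exact Or.inr ⟨s1.trans t2.symm, t1.trans s2.symm⟩
    · exact Or.inl ⟨s1.trans s2.symm, t1.trans t2.symm⟩
  by_cases haf : src a = f ∨ tgt a = f
  · by_cases hag : src a = g ∨ tgt a = g
    · -- triangle case
      have ha : (src a = f ∧ tgt a = g) ∨ (src a = g ∧ tgt a = f) := by
        rcases haf with h1 | h1 <;> rcases hag with h2 | h2
        · exact absurd (h1.symm.trans h2) hfg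
        · exact Or.inl ⟨h1, h2⟩
        · exact Or.inr ⟨h2, h1⟩
        · exact absurd (h1.symm.trans h2) hfg
      have k1 := key f b a
      have k2 := key g c a
      have k3 := key e b c
      have hef : e ≠ f := Ne.symm hfe
      have heg : e ≠ g := Ne.symm hge
      have hgf : g ≠ f := Ne.symm hfg
      rcases hbf with ⟨s1, t1⟩ | ⟨s1, t1⟩ <;> rcases hcg with ⟨s2, t2⟩ | ⟨s2, t2⟩ <;>
        rcases ha with ⟨s3, t3⟩ | ⟨s3, t3⟩ <;>
        simp only [s1, t1, s2, t2, s3, t3, if_pos, if_neg, hef, heg, hfe, hge, hfg, hgf,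
          if_true, if_false, sub_zero, zero_sub, ite_true, ite_false,
          ne_eq, not_false_iff] at k1 k2 k3 <;>
        first
          | linear_combination (k1 + k2 + k3) / 2
          | linear_combination (k1 + k2 - k3) / 2
          | linear_combination (k1 - k2 + k3) / 2
          | linear_combination (k1 - k2 - k3) / 2
          | linear_combination (-k1 + k2 + k3) / 2
          | linear_combination (-k1 + k2 - k3) / 2
          | linear_combination (-k1 - k2 + k3) / 2
          | linear_combination (-k1 - k2 - k3) / 2
    · push_neg at hag
      exact M e g c a hcg hag.1 hag.2
  · push_neg at haf
    exact M e f b a hbf haf.1 haf.2
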